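/- Let H be a connected finite simple graph on n vertices and let k be a natural number with 1 ≤ k < n such that the girth of H is strictly greater than k. Then the maximum of e_H(S) over all k-element vertex sets S of H equals k − 1 (i.e., the Densest Subgraph value for parameter k is exactly k − 1). -/

import Mathlib

open SimpleGraph

/-- `eCount H S` is the number of edges of `H` with both endpoints in `S`. -/
noncomputable def eCount {V : Type*} (H : SimpleGraph V) (S : Finset V) : ℕ :=
  {e : H.edgeSet | ∀ v ∈ (e : Sym2 V), v ∈ S}.ncard

/-- The Densest Subgraph value: the maximum of `eCount H S` over all `k`-element vertex sets. -/
noncomputable def optDS {V : Type*} [Fintype V] (H : SimpleGraph V) (k : ℕ) : ℕ :=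
  (Finset.univ.powersetCard k).sup (fun S => eCount H S)

section Aux

open Function

variable {V : Type*}

/-- Edges of `H` contained in the vertex set `s`, as a set of `Sym2 V`. -/
def inE (H : SimpleGraph V) (s : Set V) : Set (Sym2 V) :=
  {e | e ∈ H.edgeSet ∧ ∀ v ∈ e, v ∈ s}

lemma image_induce_edgeSet (H : SimpleGraph V) (s : Set V) :
    Sym2.map (Subtype.val : s → V) '' (H.induce s).edgeSet = inE H s := by
  ext e
  constructor
  · rintro ⟨e', he', rfl⟩
    induction e' using Sym2.ind with
    | _ x y =>
      rw [SimpleGraph.mem_edgeSet _] at he'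
      refine ⟨(SimpleGraph.mem_edgeSet _).2 he', ?_⟩
      intro v hv
      rcases Sym2.mem_iff.1 hv with h | h <;> subst h
      · exact x.2
      · exact y.2
  · rintro ⟨he, hs⟩
    induction e using Sym2.ind with
    | _ x y =>
      rw [SimpleGraph.mem_edgeSet _] at he
      have hx : x ∈ s := hs x (Sym2.mem_mk_left x y)
      have hy : y ∈ s := hs y (Sym2.mem_mk_right x y)
      exact ⟨s(⟨x, hx⟩, ⟨y, hy⟩), (SimpleGraph.mem_edgeSet _).2 he, rfl⟩

lemma inE_ncard (H : SimpleGraph V) (s : Set V) :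
    (inE H s).ncard = (H.induce s).edgeSet.ncard := by
  rw [← image_induce_edgeSet, Set.ncard_image_of_injective _ (Sym2.map.injective Subtype.val_injective)]

lemma cycle_length_le {W : Type*} [Fintype W] {G : SimpleGraph W} {a : W} {c : G.Walk a a}
    (hc : c.IsCycle) : c.length ≤ Fintype.card W := by
  have h1 : c.support.length = c.length + 1 := c.length_support
  have h2 := hc.support_nodup.length_le_card
  have h3 : c.support.tail.length = c.support.length - 1 := List.length_tail
  omega

lemma induce_isAcyclic {W : Type*} {G : SimpleGraph W} (hac : G.IsAcyclic) (s : Set W) :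
    (G.induce s).IsAcyclic := by
  intro a c hc
  exact hac _ ((Walk.map_isCycle_iff_of_injective
    (f := (SimpleGraph.Embedding.induce s).toHom) (RelEmbedding.injective _)).2 hc)

lemma forest_bound : ∀ (n : ℕ) {W : Type*} [Finite W] (G : SimpleGraph W),
    Nat.card W = n → G.IsAcyclic → G.edgeSet.ncard ≤ n - 1 := by
  intro n
  induction n using Nat.strong_induction_on with
  | _ n ih =>
    intro W _ G hcard hac
    cases isEmpty_or_nonempty W with
    | inl h =>
      have : G.edgeSet = ∅ := Set.eq_empty_of_isEmpty _
      simp [this]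
    | inr h =>
      obtain ⟨w⟩ := h
      set A : Set W := {v | G.Reachable w v} with hAdef
      have hadjA : ∀ ⦃u v⦄, G.Adj u v → (u ∈ A ↔ v ∈ A) := fun u v huv =>
        ⟨fun hu => hu.trans huv.reachable, fun hv => hv.trans huv.symm.reachable⟩
      by_cases hA : ∀ v, v ∈ A
      · -- G is connected, hence a tree
        haveI : Nonempty W := ⟨w⟩
        have hconn : G.Connected := SimpleGraph.Connected.mk fun u v => (hA u).symm.trans (hA v)
        have htree : G.IsTree := ⟨hconn, hac⟩
        classical
        haveI : Fintype W := Fintype.ofFinite W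
        haveI : Fintype G.edgeSet := Fintype.ofFinite _
        have hE := htree.card_edgeFinset
        have h1 : G.edgeSet.ncard = G.edgeFinset.card := by
          rw [SimpleGraph.edgeFinset_card, Set.ncard_eq_toFinset_card', Set.toFinset_card]
        have h2 : Nat.card W = Fintype.card W := Nat.card_eq_fintype_card
        omega
      · push_neg at hA
        obtain ⟨b, hb⟩ := hA
        -- split edges into those inside A and those inside Aᶜ
        have hsplit : G.edgeSet = inE G A ∪ inE G Aᶜ := by
          ext e
          induction e using Sym2.ind with
          | _ x y =>
            constructor
            · intro he
              have hadj : G.Adj x y := (SimpleGraph.mem_edgeSet _).1 he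
              by_cases hx : x ∈ A
              · exact Or.inl ⟨he, by
                  intro v hv
                  rcases Sym2.mem_iff.1 hv with h | h <;> subst h
                  · exact hx
                  · exact (hadjA hadj).1 hx⟩
              · refine Or.inr ⟨he, ?_⟩
                intro v hv
                rcases Sym2.mem_iff.1 hv with h | h <;> subst h
                · exact hx
                · exact fun hy => hx ((hadjA hadj).2 hy)
            · rintro (he | he) <;> exact he.1
        have hdisj : Disjoint (inE G A) (inE G Aᶜ) := by
          rw [Set.disjoint_left]
          rintro e ⟨he1, hin⟩ ⟨he2, hout⟩
          induction e using Sym2.ind with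
          | _ x y =>
            exact hout x (Sym2.mem_mk_left x y) (hin x (Sym2.mem_mk_left x y))
        have hcardsum : G.edgeSet.ncard = (inE G A).ncard + (inE G Aᶜ).ncard := by
          rw [hsplit]
          exact Set.ncard_union_eq hdisj (Set.toFinite _) (Set.toFinite _)
        -- apply the induction hypothesis to both sides
        have hAcard : A.ncard + Aᶜ.ncard = n := by
          rw [← hcard]; exact Set.ncard_add_ncard_compl A
        have hApos : 0 < A.ncard :=
          (Set.ncard_pos (Set.toFinite _)).2 ⟨w, Set.mem_setOf.2 (SimpleGraph.Reachable.refl w)⟩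
        have hAcpos : 0 < Aᶜ.ncard := (Set.ncard_pos (Set.toFinite _)).2 ⟨b, hb⟩
        have hA1 : Nat.card ↥A = A.ncard := Nat.card_coe_set_eq A
        have hA2 : Nat.card ↥(Aᶜ) = Aᶜ.ncard := Nat.card_coe_set_eq Aᶜ
        have ih1 := ih A.ncard (by omega) (G.induce A) hA1 (induce_isAcyclic hac A)
        have ih2 := ih Aᶜ.ncard (by omega) (G.induce Aᶜ) hA2 (induce_isAcyclic hac Aᶜ)
        rw [← inE_ncard] at ih1 ih2
        omega

lemma eCount_eq (H : SimpleGraph V) (S : Finset V) :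
    eCount H S = (inE H (↑S : Set V)).ncard := by
  rw [eCount, ← Set.ncard_image_of_injective _
    (Subtype.val_injective (p := (· ∈ H.edgeSet)))]
  congr 1
  ext e
  constructor
  · rintro ⟨⟨e', he'⟩, hP, rfl⟩
    exact ⟨he', fun v hv => hP v hv⟩
  · rintro ⟨he, hs⟩
    exact ⟨⟨e, he⟩, fun v hv => hs v hv, rfl⟩

lemma eCount_le [Fintype V] (H : SimpleGraph V) {k : ℕ} (hgirth : (k : ℕ∞) < H.egirth)
    (S : Finset V) (hS : S.card = k) : eCount H S ≤ k - 1 := by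
  haveI : Fintype ↥(↑S : Set V) := S.finite_toSet.fintype
  have hac : (H.induce (↑S : Set V)).IsAcyclic := by
    intro a c hc
    set f := (SimpleGraph.Embedding.induce (↑S : Set V)).toHom with hf
    have hc' := (Walk.map_isCycle_iff_of_injective (f := f) (RelEmbedding.injective _)).2 hc
    have hge : H.egirth ≤ (((c.map f).length : ℕ) : ℕ∞) := by
      have h : (⨅ a, ⨅ w : H.Walk a a, ⨅ _ : w.IsCycle, (w.length : ℕ∞)) ≤
          (((c.map f).length : ℕ) : ℕ∞) :=
        iInf_le_of_le (f a) (iInf_le_of_le (c.map f) (iInf_le _ hc'))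
      exact h
    have hlen : c.length ≤ k := by
      have h1 := cycle_length_le hc
      have h2 : Fintype.card ↥(↑S : Set V) = S.card := by
        rw [← Nat.card_eq_fintype_card, Nat.card_coe_set_eq, Set.ncard_coe_finset]
      omega
    have hmap : (c.map f).length = c.length := Walk.length_map _ _
    have : (k : ℕ∞) < (k : ℕ∞) := by
      refine hgirth.trans_le (hge.trans ?_)
      rw [hmap]
      exact_mod_cast Nat.cast_le.2 hlen
    exact absurd this (lt_irrefl _)
  have hcard : Nat.card ↥(↑S : Set V) = k := by
    rw [Nat.card_coe_set_eq, Set.ncard_coe_finset, hS]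
  calc eCount H S = (inE H (↑S : Set V)).ncard := eCount_eq H S
    _ = (H.induce (↑S : Set V)).edgeSet.ncard := inE_ncard H _
    _ ≤ Nat.card ↥(↑S : Set V) - 1 := forest_bound _ _ rfl hac
    _ = k - 1 := by rw [hcard]

lemma exists_dense [Fintype V] (H : SimpleGraph V) (hconn : H.Connected) :
    ∀ j : ℕ, 1 ≤ j → j ≤ Fintype.card V →
      ∃ S : Finset V, S.card = j ∧ j ≤ eCount H S + 1 := by
  intro j
  induction j with
  | zero => intro h; omega
  | succ j ihj =>
    intro _ hle
    rcases Nat.eq_zero_or_pos j with rfl | hj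
    · haveI : Nonempty V := Fintype.card_pos_iff.1 (by omega)
      obtain ⟨v⟩ := ‹Nonempty V›
      exact ⟨{v}, Finset.card_singleton v, by omega⟩
    · obtain ⟨S, hScard, hSc⟩ := ihj hj (by omega)
      have hSne : S.Nonempty := Finset.card_pos.1 (by omega)
      obtain ⟨u, hu⟩ := hSne
      have hex : ∃ x, x ∉ S := by
        by_contra hx
        push_neg at hx
        have h := Finset.eq_univ_iff_forall.2 hx
        rw [h, Finset.card_univ] at hScard
        omega
      obtain ⟨x, hx⟩ := hex
      obtain ⟨p⟩ := hconn.preconnected u x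
      obtain ⟨d, _, hd1, hd2⟩ := p.exists_boundary_dart (↑S : Set V) hu hx
      classical
      refine ⟨insert d.snd S, ?_, ?_⟩
      · rw [Finset.card_insert_of_notMem hd2, hScard]
      · have hnew : s(d.fst, d.snd) ∈ inE H (↑(insert d.snd S) : Set V) := by
          refine ⟨(SimpleGraph.mem_edgeSet _).2 d.adj, ?_⟩
          intro v hv
          rcases Sym2.mem_iff.1 hv with h | h <;> subst h
          · exact Finset.mem_coe.2 (Finset.mem_insert_of_mem hd1)
          · exact Finset.mem_coe.2 (Finset.mem_insert_self _ _)
        have hsub : insert s(d.fst, d.snd) (inE H (↑S : Set V)) ⊆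
            inE H (↑(insert d.snd S) : Set V) := by
          intro e he
          rcases Set.mem_insert_iff.1 he with rfl | he
          · exact hnew
          · exact ⟨he.1, fun v hv => Finset.mem_coe.2
              (Finset.mem_insert_of_mem (Finset.mem_coe.1 (he.2 v hv)))⟩
        have h1 : s(d.fst, d.snd) ∉ inE H (↑S : Set V) := fun hmem =>
          hd2 (hmem.2 d.snd (Sym2.mem_mk_right _ _))
        have h2 := Set.ncard_insert_of_notMem h1 (Set.toFinite _)
        have h3 := Set.ncard_le_ncard hsub (Set.toFinite _)
        rw [eCount_eq] at hSc ⊢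
        omega

end Aux

/-- If `H` is connected on `n` vertices, `1 ≤ k < n` and the girth of `H` is
strictly greater than `k`, then the Densest Subgraph value for parameter `k` is exactly
`k - 1`. -/
theorem stmt3 {V : Type*} [Fintype V] (H : SimpleGraph V) (hconn : H.Connected)
    (k : ℕ) (hk1 : 1 ≤ k) (hkn : k < Fintype.card V) (hgirth : (k : ℕ∞) < H.egirth) :
    optDS H k = k - 1 := by
  apply le_antisymm
  · apply Finset.sup_le
    intro S hS
    rw [Finset.mem_powersetCard_univ] at hS
    exact eCount_le H hgirth S hS
  · obtain ⟨S, hScard, hSc⟩ := exists_dense H hconn k hk1 (le_of_lt hkn)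
    have hmem : S ∈ Finset.univ.powersetCard k := Finset.mem_powersetCard_univ.2 hScard
    have hle : eCount H S ≤ optDS H k := Finset.le_sup (f := fun S => eCount H S) hmem
    omega
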